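/- Let A be a nontrivial commutative ring and let a₁, …, aₙ be a regular sequence in A. Then in the polynomial ring A[v₁, …, vₙ, s] in n+1 variables, the sequence v₁·s − a₁, …, vₙ·s − aₙ is a regular sequence. -/

import Mathlib

set_option maxHeartbeats 1000000

open MvPolynomial

namespace RegVS

variable {A : Type} [CommRing A] {n : ℕ}

/-- the bound-variable degree: total degree in variables `i < k`. -/
def degb (k : ℕ) (μ : Fin n →₀ ℕ) : ℕ :=
  ∑ i ∈ Finset.univ.filter (fun i : Fin n => (i : ℕ) < k), μ i

lemma degb_add (k : ℕ) (μ ν : Fin n →₀ ℕ) :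
    degb k (μ + ν) = degb k μ + degb k ν := by
  simp [degb, Finset.sum_add_distrib]

lemma degb_single (k : ℕ) (i : Fin n) (m : ℕ) :
    degb k (Finsupp.single i m) = if (i : ℕ) < k then m else 0 := by
  classical
  simp only [degb, Finsupp.single_apply]
  rw [Finset.sum_ite_eq (Finset.univ.filter (fun i : Fin n => (i : ℕ) < k)) i (fun _ => m)]
  simp

lemma degb_mono (k k' : ℕ) (h : k ≤ k') (μ : Fin n →₀ ℕ) : degb k μ ≤ degb k' μ := by
  apply Finset.sum_le_sum_of_subset
  intro i hi
  rcases Finset.mem_filter.1 hi with ⟨h1, h2⟩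
  exact Finset.mem_filter.2 ⟨h1, lt_of_lt_of_le h2 h⟩

lemma degb_zero (k : ℕ) : degb (n := n) k 0 = 0 := by simp [degb]

/-- ideal of bound variables -/
noncomputable def Mk (A : Type) [CommRing A] (n k : ℕ) : Ideal (MvPolynomial (Fin n) A) :=
  Ideal.span ((fun i => (X i : MvPolynomial (Fin n) A)) '' {i : Fin n | (i : ℕ) < k})

lemma X_mem_Mk {k : ℕ} {i : Fin n} (h : (i : ℕ) < k) : (X i : MvPolynomial (Fin n) A) ∈ Mk A n k :=
  Ideal.subset_span ⟨i, h, rfl⟩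

lemma Mk_mono {k k' : ℕ} (h : k ≤ k') : Mk A n k ≤ Mk A n k' :=
  Ideal.span_mono (Set.image_mono fun i hi => lt_of_lt_of_le hi h)

lemma monomial_mem_Mk (k : ℕ) (μ : Fin n →₀ ℕ) (c : A) :
    monomial μ c ∈ Mk A n k ^ (degb k μ) := by
  classical
  induction μ using Finsupp.induction with
  | zero => simp [degb_zero]
  | single_add i m ν hi hm ih =>
      have hsplit : (monomial (Finsupp.single i m + ν) c : MvPolynomial (Fin n) A)
          = (X i) ^ m * monomial ν c := by
        rw [X_pow_eq_monomial, monomial_mul, one_mul]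
      rw [hsplit, degb_add, degb_single]
      split_ifs with h
      · rw [pow_add]
        exact Submodule.mul_mem_mul (Ideal.pow_mem_pow (X_mem_Mk h) m) ih
      · rw [zero_add]
        exact Ideal.mul_mem_left _ _ ih

lemma mem_Mk_of_support {k e : ℕ} {q : MvPolynomial (Fin n) A}
    (h : ∀ μ ∈ q.support, e ≤ degb k μ) : q ∈ Mk A n k ^ e := by
  rw [q.as_sum]
  refine Ideal.sum_mem _ fun μ hμ => ?_
  exact Ideal.pow_le_pow_right (h μ hμ) (monomial_mem_Mk k μ _)

lemma support_degb_one_of_mem {k : ℕ} {q : MvPolynomial (Fin n) A} (hq : q ∈ Mk A n k) :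
    ∀ μ ∈ q.support, 1 ≤ degb k μ := by
  classical
  refine Submodule.span_induction ?_ ?_ ?_ ?_ hq
  · rintro x ⟨i, hi, rfl⟩ μ hμ
    have hX : (X i : MvPolynomial (Fin n) A) = monomial (Finsupp.single i 1) 1 := rfl
    simp only [] at hμ
    rw [hX] at hμ
    have := MvPolynomial.support_monomial_subset hμ
    rcases Finset.mem_singleton.1 this with rfl
    rw [degb_single, if_pos (show (i:ℕ) < k from hi)]
  · intro μ hμ; simp at hμ
  · intro x y _ _ hx hy μ hμ
    rcases Finset.mem_union.1 (MvPolynomial.support_add hμ) with h | h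
    exacts [hx μ h, hy μ h]
  · intro r x _ hx μ hμ
    rw [smul_eq_mul] at hμ
    rcases Finset.mem_add.1 (MvPolynomial.support_mul r x hμ) with ⟨ν₁, h₁, ν₂, h₂, rfl⟩
    rw [degb_add]
    have := hx ν₂ h₂
    omega

lemma support_degb_of_mem {k e : ℕ} {q : MvPolynomial (Fin n) A} (hq : q ∈ Mk A n k ^ e) :
    ∀ μ ∈ q.support, e ≤ degb k μ := by
  classical
  induction e generalizing q with
  | zero => intro μ _; exact Nat.zero_le _
  | succ e ih =>
      rw [pow_succ'] at hq
      intro μ hμ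
      refine Submodule.mul_induction_on
        (C := fun z => ∀ ν ∈ z.support, e + 1 ≤ degb k ν) hq ?_ ?_ μ hμ
      · intro x hx y hy ν hν
        have hsub := MvPolynomial.support_mul x y hν
        rcases Finset.mem_add.1 hsub with ⟨ν₁, h₁, ν₂, h₂, rfl⟩
        rw [degb_add]
        have e1 := support_degb_one_of_mem hx ν₁ h₁
        have e2 := ih hy ν₂ h₂
        omega
      · intro x y hx hy ν hν
        rcases Finset.mem_union.1 (MvPolynomial.support_add hν) with h | h
        exacts [hx ν h, hy ν h]


section Bside

variable (A n) in
/-- notation shortcut for the big ring -/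
abbrev BR (A : Type) [CommRing A] (n : ℕ) := MvPolynomial (Option (Fin n)) A

/-- the generators `v i * s - a i` -/
noncomputable def fg (a : Fin n → A) (i : Fin n) : BR A n :=
  X (some i) * X none - C (a i)

/-- the ideal generated by the first `k` of them -/
noncomputable def Ik (a : Fin n → A) (k : ℕ) : Ideal (BR A n) :=
  Ideal.span (fg a '' {i : Fin n | (i : ℕ) < k})

/-- the ideal generated by the first `k` elements of `a` -/
noncomputable def Ia (a : Fin n → A) (k : ℕ) : Ideal A :=
  Ideal.span (a '' {i : Fin n | (i : ℕ) < k})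

lemma fg_mem_Ik {a : Fin n → A} {k : ℕ} {i : Fin n} (h : (i : ℕ) < k) : fg a i ∈ Ik a k :=
  Ideal.subset_span ⟨i, h, rfl⟩

lemma Ik_mono {a : Fin n → A} {k k' : ℕ} (h : k ≤ k') : Ik a k ≤ Ik a k' :=
  Ideal.span_mono (Set.image_mono fun i hi => lt_of_lt_of_le hi h)

/-- homogenization map -/
noncomputable def Phi (A : Type) [CommRing A] (n k : ℕ) : MvPolynomial (Fin n) A →ₐ[A] BR A n :=
  aeval fun i => if (i : ℕ) < k then X (some i) * X none else X (some i)

/-- evaluation of bound variables at `a` -/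
noncomputable def Ev (a : Fin n → A) (k : ℕ) : MvPolynomial (Fin n) A →ₐ[A] BR A n :=
  aeval fun i => if (i : ℕ) < k then C (a i) else X (some i)

@[simp] lemma Phi_X_lt {k : ℕ} {i : Fin n} (h : (i : ℕ) < k) :
    Phi A n k (X i) = X (some i) * X none := by simp [Phi, h]

@[simp] lemma Phi_X_ge {k : ℕ} {i : Fin n} (h : ¬ (i : ℕ) < k) :
    Phi A n k (X i) = X (some i) := by simp [Phi, h]

@[simp] lemma Ev_X_lt {a : Fin n → A} {k : ℕ} {i : Fin n} (h : (i : ℕ) < k) :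
    Ev a k (X i) = C (a i) := by simp [Ev, h]

@[simp] lemma Ev_X_ge {a : Fin n → A} {k : ℕ} {i : Fin n} (h : ¬ (i : ℕ) < k) :
    Ev a k (X i) = X (some i) := by simp [Ev, h]

/-- cancellation by a monomial in `MvPolynomial` -/
lemma monomial_one_cancel {σ : Type*} {R : Type*} [CommRing R] {ν : σ →₀ ℕ}
    {x y : MvPolynomial σ R} (h : monomial ν 1 * x = monomial ν 1 * y) : x = y := by
  have := congrArg (fun z => MvPolynomial.divMonomial z ν) h
  simpa using this

lemma X_pow_cancel {σ : Type*} {R : Type*} [CommRing R] (t : σ) (e : ℕ)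
    {x y : MvPolynomial σ R} (h : (X t) ^ e * x = (X t) ^ e * y) : x = y := by
  rw [X_pow_eq_monomial, ] at h
  exact monomial_one_cancel h

/-- `Phi` on monomials -/
lemma Phi_monomial (k : ℕ) (μ : Fin n →₀ ℕ) (c : A) :
    Phi A n k (monomial μ c) =
      monomial (Finsupp.mapDomain some μ + Finsupp.single none (degb k μ)) c := by
  classical
  induction μ using Finsupp.induction with
  | zero => simp [degb_zero, Finsupp.mapDomain_zero, algebraMap_eq]
  | single_add i m ν hi hm ih =>
      have hsplit : (monomial (Finsupp.single i m + ν) c : MvPolynomial (Fin n) A)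
          = (X i) ^ m * monomial ν c := by
        rw [X_pow_eq_monomial, monomial_mul, one_mul]
      rw [hsplit, map_mul, map_pow, ih, Finsupp.mapDomain_add, degb_add,
        Finsupp.mapDomain_single, degb_single]
      by_cases h : (i : ℕ) < k
      · rw [Phi_X_lt h, if_pos h, mul_pow, X_pow_eq_monomial, X_pow_eq_monomial,
          monomial_mul, monomial_mul, one_mul, one_mul, Finsupp.single_add]
        congr 1
        abel
      · rw [Phi_X_ge h, if_neg h, X_pow_eq_monomial, monomial_mul, one_mul, zero_add]
        congr 1
        abel

/-- `Ev` on monomials supported below `k` gives a constant -/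
lemma dvd_Phi_of_mem_Mk {k K e : ℕ} (hkK : k ≤ K) {q : MvPolynomial (Fin n) A}
    (hq : q ∈ Mk A n k ^ e) : (X none : BR A n) ^ e ∣ Phi A n K q := by
  classical
  have hsupp := support_degb_of_mem hq
  rw [q.as_sum, map_sum]
  refine Finset.dvd_sum fun μ hμ => ?_
  rw [Phi_monomial]
  have he : e ≤ degb K μ := le_trans (hsupp μ hμ) (degb_mono _ _ hkK μ)
  refine ⟨monomial (Finsupp.mapDomain some μ + Finsupp.single none (degb K μ - e)) (coeff μ q), ?_⟩
  rw [X_pow_eq_monomial, monomial_mul, one_mul]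
  congr 1
  rw [add_left_comm (Finsupp.single none e), ← Finsupp.single_add, Nat.add_sub_cancel' he]

end Bside


section Pure

variable {a : Fin n → A}

lemma mem_supported_iff {σ : Type*} {S : Set σ} {p : MvPolynomial σ A} :
    p ∈ supported A S ↔ ∀ μ ∈ p.support, ∀ i ∈ μ.support, i ∈ S := by
  rw [mem_supported]
  constructor
  · intro h μ hμ i hi
    exact h (MvPolynomial.mem_vars i |>.2 ⟨μ, hμ, hi⟩)
  · intro h i hi
    rcases (MvPolynomial.mem_vars i).1 hi with ⟨μ, hμ, hiμ⟩
    exact h μ hμ i hiμ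

lemma degb_eq_degree {k : ℕ} {μ : Fin n →₀ ℕ} (h : ∀ i ∈ μ.support, (i : ℕ) < k) :
    degb k μ = μ.degree := by
  classical
  rw [Finsupp.degree, degb]
  refine (Finset.sum_subset ?_ ?_).symm
  · intro i hi
    exact Finset.mem_filter.2 ⟨Finset.mem_univ _, h i hi⟩
  · intro i _ hi
    exact Finsupp.notMem_support_iff.1 hi

lemma map_aeval_Mk (a : Fin n → A) (k : ℕ) :
    Ideal.map (aeval (R := A) a : MvPolynomial (Fin n) A →ₐ[A] A) (Mk A n k) = Ia a k := by
  rw [Mk, Ideal.map_span, Ia, ← Set.image_comp]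
  congr 1
  exact Set.image_congr fun i _ => by simp

lemma aeval_mem_Ia {k e : ℕ} {q : MvPolynomial (Fin n) A} (hq : q ∈ Mk A n k ^ e) :
    aeval (R := A) a q ∈ Ia a k ^ e := by
  have := Ideal.mem_map_of_mem (aeval (R := A) a) hq
  rwa [Ideal.map_pow, map_aeval_Mk] at this

/-- every element of `Ia^e` has a representative polynomial in `Mk^e` supported below `k` -/
lemma exists_repr {k e : ℕ} {x : A} (hx : x ∈ Ia a k ^ e) :
    ∃ r : MvPolynomial (Fin n) A, r ∈ Mk A n k ^ e ∧
      r ∈ supported A {i : Fin n | (i : ℕ) < k} ∧ aeval (R := A) a r = x := by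
  classical
  set ev' : MvPolynomial (Fin n) A →ₐ[A] A :=
    aeval (fun i => if (i : ℕ) < k then a i else 0) with hev'
  have hmapev : Ideal.map ev' (Mk A n k) = Ia a k := by
    rw [Mk, Ideal.map_span, Ia, ← Set.image_comp]
    congr 1
    refine Set.image_congr fun i hi => ?_
    simp [ev', if_pos (show (i : ℕ) < k from hi)]
  have hsurj : Function.Surjective ⇑ev' := fun c => ⟨C c, by simp [ev']⟩
  have hx' : x ∈ Ideal.map ev' (Mk A n k ^ e) := by
    rw [Ideal.map_pow, hmapev]; exact hx
  obtain ⟨q, hq, hqx⟩ := (Ideal.mem_map_iff_of_surjective ev' hsurj).1 hx'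
  set ρ : MvPolynomial (Fin n) A →ₐ[A] MvPolynomial (Fin n) A :=
    aeval (fun i => if (i : ℕ) < k then X i else 0) with hρ
  have hρsupp : ∀ w : MvPolynomial (Fin n) A, ρ w ∈ supported A {i : Fin n | (i : ℕ) < k} := by
    intro w
    induction w using MvPolynomial.induction_on with
    | C c => simpa [ρ] using Subalgebra.algebraMap_mem (supported A {i : Fin n | (i : ℕ) < k}) c
    | add p q hp hq => rw [map_add]; exact Subalgebra.add_mem _ hp hq
    | mul_X p i hp =>
        rw [map_mul]
        refine Subalgebra.mul_mem _ hp ?_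
        by_cases h : (i : ℕ) < k
        · have : ρ (X i) = X i := by simp [ρ, if_pos h]
          rw [this, supported_eq_adjoin_X]
          exact Algebra.subset_adjoin ⟨i, h, rfl⟩
        · have : ρ (X i) = 0 := by simp [ρ, if_neg h]
          rw [this]; exact Subalgebra.zero_mem _
  refine ⟨ρ q, ?_, hρsupp q, ?_⟩
  · have h1 : Ideal.map ρ (Mk A n k) ≤ Mk A n k := by
      rw [Mk, Ideal.map_span, Ideal.span_le, ← Set.image_comp]
      rintro _ ⟨i, hi, rfl⟩
      have : ρ (X i) = X i := by simp [ρ, if_pos (show (i : ℕ) < k from hi)]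
      simp only [Function.comp_apply, this]
      exact X_mem_Mk hi
    have := Ideal.mem_map_of_mem ρ hq
    rw [Ideal.map_pow] at this
    exact Ideal.pow_right_mono h1 e this
  · have : (aeval (R := A) a).comp ρ = ev' := by
      apply MvPolynomial.algHom_ext
      intro i
      by_cases h : (i : ℕ) < k <;> simp [ρ, ev', h]
    calc aeval (R := A) a (ρ q) = ((aeval (R := A) a).comp ρ) q := rfl
      _ = ev' q := by rw [this]
      _ = x := hqx

lemma Ev_of_supported {k K : ℕ} (hkK : k ≤ K) {r : MvPolynomial (Fin n) A}
    (hr : r ∈ supported A {i : Fin n | (i : ℕ) < k}) :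
    Ev a K r = C (aeval (R := A) a r) := by
  rw [supported_eq_adjoin_X] at hr
  induction hr using Algebra.adjoin_induction with
  | mem x hx =>
      rcases hx with ⟨i, hi, rfl⟩
      have hik : (i : ℕ) < K := lt_of_lt_of_le hi hkK
      simp [Ev_X_lt hik]
  | algebraMap r => simp [algebraMap_eq]
  | add x y _ _ hx hy => rw [map_add, map_add, hx, hy, map_add]
  | mul x y _ _ hx hy => rw [map_mul, map_mul, hx, hy, map_mul]

/-- `Phi` of a `degb`-homogeneous polynomial supported below `k`. -/
lemma Phi_of_homog {k m : ℕ} {F : MvPolynomial (Fin n) A}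
    (hdeg : ∀ μ ∈ F.support, degb k μ = m) :
    Phi A n k F = (X none : BR A n) ^ m * rename some F := by
  classical
  conv_lhs => rw [F.as_sum]
  conv_rhs => rw [F.as_sum]
  rw [map_sum, map_sum, Finset.mul_sum]
  refine Finset.sum_congr rfl fun μ hμ => ?_
  rw [Phi_monomial, rename_monomial, X_pow_eq_monomial, monomial_mul, one_mul, hdeg μ hμ,
    add_comm]

/-- Quasi-regularity, assuming the core statement at stage `k`. -/
lemma QR {k : ℕ}
    (hcore : ∀ (e : ℕ) (p : MvPolynomial (Fin n) A) (h : BR A n), p ∈ Mk A n k ^ e →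
      Ev a k p = 0 → (X none : BR A n) ^ e * h = Phi A n k p → h ∈ Ik a k)
    {m : ℕ} {F : MvPolynomial (Fin n) A}
    (hFsupp : F ∈ supported A {i : Fin n | (i : ℕ) < k})
    (hFdeg : ∀ μ ∈ F.support, degb k μ = m)
    (hFval : aeval (R := A) a F ∈ Ia a k ^ (m + 1)) :
    ∀ μ, coeff μ F ∈ Ia a k := by
  classical
  obtain ⟨r, hrM, hrsupp, hrval⟩ := exists_repr hFval
  set p := F - r with hp
  have hpM : p ∈ Mk A n k ^ m := by
    refine Submodule.sub_mem _ ?_ (Ideal.pow_le_pow_right m.le_succ hrM)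
    exact mem_Mk_of_support fun μ hμ => le_of_eq (hFdeg μ hμ).symm
  have hpEv : Ev a k p = 0 := by
    rw [hp, map_sub, Ev_of_supported le_rfl hFsupp, Ev_of_supported le_rfl hrsupp, hrval,
      sub_self]
  obtain ⟨g', hg'⟩ := dvd_Phi_of_mem_Mk le_rfl hrM
  set h : BR A n := rename some F - X none * g' with hh
  have hPhi : (X none : BR A n) ^ m * h = Phi A n k p := by
    rw [hh, hp, map_sub, mul_sub, Phi_of_homog hFdeg, hg']
    ring
  have hI : h ∈ Ik a k := hcore m p h hpM hpEv hPhi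
  set σ₀ : BR A n →ₐ[A] MvPolynomial (Fin n) A :=
    aeval (fun t : Option (Fin n) => t.elim 0 (fun i => (X i : MvPolynomial (Fin n) A)))
    with hσ₀
  have hσh : σ₀ h = F := by
    rw [hh, map_sub, map_mul]
    have h1 : σ₀ (X none) = 0 := by simp [σ₀]
    have h2 : σ₀ (rename some F) = F := by
      rw [hσ₀, aeval_rename]
      simp only [Function.comp_def, Option.elim]
      exact aeval_X_left_apply F
    rw [h1, h2, zero_mul, sub_zero]
  have hmap : Ideal.map σ₀ (Ik a k) ≤ Ideal.map (C : A →+* MvPolynomial (Fin n) A) (Ia a k) := by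
    rw [Ik, Ideal.map_span, Ideal.span_le, ← Set.image_comp]
    rintro _ ⟨i, hi, rfl⟩
    have : σ₀ (fg a i) = - C (a i) := by
      simp [fg, σ₀, algebraMap_eq]
    simp only [Function.comp_apply, this]
    exact neg_mem (Ideal.mem_map_of_mem _ (Ideal.subset_span ⟨i, hi, rfl⟩))
  have hF : F ∈ Ideal.map (C : A →+* MvPolynomial (Fin n) A) (Ia a k) := by
    rw [← hσh]
    exact hmap (Ideal.mem_map_of_mem _ hI)
  exact fun μ => mem_map_C_iff.1 hF μ

/-- Non-zero-divisor on powers, assuming core at stage `k` and regularity. -/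
lemma NZD [Nontrivial A] {k : ℕ}
    (hcore : ∀ (e : ℕ) (p : MvPolynomial (Fin n) A) (h : BR A n), p ∈ Mk A n k ^ e →
      Ev a k p = 0 → (X none : BR A n) ^ e * h = Phi A n k p → h ∈ Ik a k)
    (kf : Fin n) (hreg : ∀ x : A, a kf * x ∈ Ia a k → x ∈ Ia a k) :
    ∀ (e : ℕ) (x : A), a kf * x ∈ Ia a k ^ e → x ∈ Ia a k ^ e := by
  classical
  intro e
  induction e with
  | zero => intro x _; simp
  | succ e ih =>
      intro x hx
      have hxe : x ∈ Ia a k ^ e := ih x (Ideal.pow_le_pow_right e.le_succ hx)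
      obtain ⟨q, hqM, hqsupp, hqval⟩ := exists_repr hxe
      set F := homogeneousComponent e q with hF
      have hcoeffF : ∀ μ, coeff μ F = if μ.degree = e then coeff μ q else 0 := fun μ =>
        coeff_homogeneousComponent e q μ
      have hsuppF : F.support ⊆ q.support := by
        intro μ hμ
        have := MvPolynomial.mem_support_iff.1 hμ
        rw [hcoeffF] at this
        by_cases h : μ.degree = e
        · exact MvPolynomial.mem_support_iff.2 (by rwa [if_pos h] at this)
        · exact absurd (by rw [if_neg h]) this
      have hbelow : ∀ μ ∈ q.support, ∀ i ∈ μ.support, (i : ℕ) < k :=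
        mem_supported_iff.1 hqsupp
      have hdegq : ∀ μ ∈ q.support, e ≤ degb k μ := support_degb_of_mem hqM
      set rest := q - F with hrest
      have hrestM : rest ∈ Mk A n k ^ (e + 1) := by
        refine mem_Mk_of_support fun μ hμ => ?_
        have hcr : coeff μ rest = coeff μ q - coeff μ F := by rw [hrest, coeff_sub]
        have hne := MvPolynomial.mem_support_iff.1 hμ
        by_cases h : μ.degree = e
        · exfalso; apply hne; rw [hcr, hcoeffF, if_pos h, sub_self]
        · have hμq : μ ∈ q.support := by
            by_contra hq'
            apply hne
            rw [hcr, hcoeffF, if_neg h, MvPolynomial.notMem_support_iff.1 hq', sub_zero]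
          have h1 := hdegq μ hμq
          have h2 : degb k μ = μ.degree := degb_eq_degree (hbelow μ hμq)
          omega
      have hFsupp : F ∈ supported A {i : Fin n | (i : ℕ) < k} :=
        mem_supported_iff.2 fun μ hμ i hi => hbelow μ (hsuppF hμ) i hi
      have hFdeg : ∀ μ ∈ F.support, degb k μ = e := by
        intro μ hμ
        have h2 : degb k μ = μ.degree := degb_eq_degree (hbelow μ (hsuppF hμ))
        have := MvPolynomial.mem_support_iff.1 hμ
        rw [hcoeffF] at this
        by_cases h : μ.degree = e
        · omega
        · exact absurd (by rw [if_neg h]) this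
      have hvalrest : aeval (R := A) a rest ∈ Ia a k ^ (e + 1) := aeval_mem_Ia hrestM
      have hq_split : q = F + rest := by rw [hrest]; ring
      have hvalF : a kf * aeval (R := A) a F ∈ Ia a k ^ (e + 1) := by
        have : a kf * x = a kf * aeval (R := A) a F + a kf * aeval (R := A) a rest := by
          rw [← mul_add, ← map_add, ← hq_split, hqval]
        have h2 : a kf * aeval (R := A) a F
            = a kf * x - a kf * aeval (R := A) a rest := by rw [this]; ring
        rw [h2]
        exact Submodule.sub_mem _ hx (Ideal.mul_mem_left _ _ hvalrest)
      -- apply QR to C (a kf) * F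
      have hcoeffs : ∀ μ, coeff μ F ∈ Ia a k := by
        intro μ
        have hQR := QR hcore (m := e) (F := C (a kf) * F)
          (Subalgebra.mul_mem _ (Subalgebra.algebraMap_mem _ _) hFsupp)
          (fun ν hν => hFdeg ν (by
            have : coeff ν (C (a kf) * F) = a kf * coeff ν F := coeff_C_mul ν (a kf) F
            have hν' := MvPolynomial.mem_support_iff.1 hν
            rw [this] at hν'
            exact MvPolynomial.mem_support_iff.2 fun h0 => hν' (by rw [h0, mul_zero])))
          (by rwa [map_mul, aeval_C, Algebra.algebraMap_self_apply])
        have := hQR μ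
        rw [coeff_C_mul] at this
        exact hreg _ this
      have hvalF' : aeval (R := A) a F ∈ Ia a k ^ (e + 1) := by
        have hsum : aeval (R := A) a F
            = ∑ μ ∈ F.support, aeval (R := A) a (monomial μ (coeff μ F)) := by
          conv_lhs => rw [F.as_sum]
          rw [map_sum]
        rw [hsum]
        refine Ideal.sum_mem _ fun μ hμ => ?_
        have h1 : (monomial μ (1 : A)) ∈ Mk A n k ^ e := by
          have := monomial_mem_Mk (A := A) k μ 1
          rw [hFdeg μ hμ] at this
          exact this
        have h2 : aeval (R := A) a (monomial μ (1 : A)) ∈ Ia a k ^ e := aeval_mem_Ia h1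
        have h3 : (monomial μ (coeff μ F) : MvPolynomial (Fin n) A)
            = C (coeff μ F) * monomial μ 1 := by rw [C_mul_monomial, mul_one]
        rw [h3, map_mul, aeval_C, Algebra.algebraMap_self_apply, pow_succ']
        exact Submodule.mul_mem_mul (hcoeffs μ) h2
      rw [show x = aeval (R := A) a F + aeval (R := A) a rest by
        rw [← map_add, ← hq_split, hqval]]
      exact Submodule.add_mem _ hvalF' hvalrest

end Pure


section CoreHelpers

variable {a : Fin n → A}

lemma degb_succ {k : ℕ} (hk : k < n) (μ : Fin n →₀ ℕ) :
    degb (k + 1) μ = degb k μ + μ ⟨k, hk⟩ := by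
  classical
  have hins : (Finset.univ.filter (fun i : Fin n => (i : ℕ) < k + 1))
      = insert ⟨k, hk⟩ (Finset.univ.filter (fun i : Fin n => (i : ℕ) < k)) := by
    ext i
    simp only [Finset.mem_filter, Finset.mem_univ, true_and, Finset.mem_insert, Fin.ext_iff]
    omega
  have hnotin : (⟨k, hk⟩ : Fin n) ∉ Finset.univ.filter (fun i : Fin n => (i : ℕ) < k) := by
    simp
  rw [degb, hins, Finset.sum_insert hnotin, add_comm]
  rfl

/-- the base case `e = 0` of the core statement -/
lemma core_e0 (a : Fin n → A) (k : ℕ) (p : MvPolynomial (Fin n) A) (h : BR A n)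
    (hEv : Ev a k p = 0) (hPhi : h = Phi A n k p) : h ∈ Ik a k := by
  have hcomp : (Ideal.Quotient.mkₐ A (Ik a k)).comp (Phi A n k)
      = (Ideal.Quotient.mkₐ A (Ik a k)).comp (Ev a k) := by
    apply MvPolynomial.algHom_ext
    intro i
    by_cases hik : (i : ℕ) < k
    · simp only [AlgHom.comp_apply, Phi_X_lt hik, Ev_X_lt hik, Ideal.Quotient.mkₐ_eq_mk]
      exact (Ideal.Quotient.mk_eq_mk_iff_sub_mem _ _).2 (fg_mem_Ik hik)
    · simp only [AlgHom.comp_apply, Phi_X_ge hik, Ev_X_ge hik]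
  have : Ideal.Quotient.mkₐ A (Ik a k) (Phi A n k p) = 0 := by
    have h1 : Ideal.Quotient.mkₐ A (Ik a k) (Phi A n k p)
        = Ideal.Quotient.mkₐ A (Ik a k) (Ev a k p) := by
      have := congrArg (fun φ => φ p) hcomp
      simpa using this
    rw [h1, hEv, map_zero]
  rw [hPhi]
  exact Ideal.Quotient.eq_zero_iff_mem.1 this

/-- image of `Ev a K` lies in the subalgebra on free variables -/
lemma Ev_mem_free (a : Fin n → A) (K : ℕ) (q : MvPolynomial (Fin n) A) :
    Ev a K q ∈ supported A {t : Option (Fin n) | ∃ j : Fin n, t = some j ∧ K ≤ (j : ℕ)} := by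
  induction q using MvPolynomial.induction_on with
  | C c => simpa [Ev, algebraMap_eq] using
      Subalgebra.algebraMap_mem (supported A {t : Option (Fin n) | ∃ j : Fin n, t = some j ∧ K ≤ (j : ℕ)}) c
  | add p q hp hq => rw [map_add]; exact Subalgebra.add_mem _ hp hq
  | mul_X p i hp =>
      rw [map_mul]
      refine Subalgebra.mul_mem _ hp ?_
      by_cases hik : (i : ℕ) < K
      · rw [Ev_X_lt hik, ← algebraMap_eq]
        exact Subalgebra.algebraMap_mem _ _
      · rw [Ev_X_ge hik, supported_eq_adjoin_X]
        exact Algebra.subset_adjoin ⟨some i, ⟨i, rfl, not_lt.1 hik⟩, rfl⟩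

/-- the de-homogenization map -/
noncomputable def piB (A : Type) [CommRing A] (n : ℕ) : BR A n →ₐ[A] MvPolynomial (Fin n) A :=
  aeval (fun t : Option (Fin n) => t.elim 1 (fun i => (X i : MvPolynomial (Fin n) A)))

@[simp] lemma piB_X_some (i : Fin n) : piB A n (X (some i)) = X i := by simp [piB]
@[simp] lemma piB_X_none : piB A n (X (none : Option (Fin n))) = 1 := by simp [piB]

lemma Ev_piB_of_free {K : ℕ} {x : BR A n}
    (hx : x ∈ supported A {t : Option (Fin n) | ∃ j : Fin n, t = some j ∧ K ≤ (j : ℕ)}) :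
    Ev a K (piB A n x) = x := by
  rw [supported_eq_adjoin_X] at hx
  induction hx using Algebra.adjoin_induction with
  | mem x hx =>
      rcases hx with ⟨t, ⟨j, rfl, hj⟩, rfl⟩
      rw [piB_X_some, Ev_X_ge (by omega)]
  | algebraMap r => rw [AlgHom.commutes, AlgHom.commutes]
  | add x y _ _ hx hy => rw [map_add, map_add, hx, hy]
  | mul x y _ _ hx hy => rw [map_mul, map_mul, hx, hy]

lemma piB_mem_free {K : ℕ} {x : BR A n}
    (hx : x ∈ supported A {t : Option (Fin n) | ∃ j : Fin n, t = some j ∧ K ≤ (j : ℕ)}) :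
    piB A n x ∈ supported A {j : Fin n | K ≤ (j : ℕ)} := by
  rw [supported_eq_adjoin_X] at hx
  induction hx using Algebra.adjoin_induction with
  | mem x hx =>
      rcases hx with ⟨t, ⟨j, rfl, hj⟩, rfl⟩
      rw [piB_X_some, supported_eq_adjoin_X]
      exact Algebra.subset_adjoin ⟨j, hj, rfl⟩
  | algebraMap r => rw [AlgHom.commutes]; exact Subalgebra.algebraMap_mem _ _
  | add x y _ _ hx hy => rw [map_add]; exact Subalgebra.add_mem _ hx hy
  | mul x y _ _ hx hy => rw [map_mul]; exact Subalgebra.mul_mem _ hx hy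

lemma aeval_congr_vars {σ : Type*} {S : Type*} [CommRing S] [Algebra A S]
    (f g : σ → S) (q : MvPolynomial σ A) (h : ∀ i ∈ q.vars, f i = g i) :
    aeval f q = aeval g q := by
  classical
  have e1 : aeval f q = ∑ μ ∈ q.support, aeval f (monomial μ (coeff μ q)) := by
    rw [← map_sum, ← q.as_sum]
  have e2 : aeval g q = ∑ μ ∈ q.support, aeval g (monomial μ (coeff μ q)) := by
    rw [← map_sum, ← q.as_sum]
  rw [e1, e2]
  refine Finset.sum_congr rfl fun μ hμ => ?_
  rw [aeval_monomial, aeval_monomial]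
  congr 1
  refine Finsupp.prod_congr fun i hi => ?_
  rw [h i ((MvPolynomial.mem_vars i).2 ⟨μ, hμ, hi⟩)]

end CoreHelpers


section Core

/-- THE CORE THEOREM -/
theorem core [Nontrivial A] (a : Fin n → A)
    (hreg : ∀ kf : Fin n, ∀ x : A, a kf * x ∈ Ia a (kf : ℕ) → x ∈ Ia a (kf : ℕ)) :
    ∀ k : ℕ, k ≤ n → ∀ (e : ℕ) (p : MvPolynomial (Fin n) A) (h : BR A n),
      p ∈ Mk A n k ^ e → Ev a k p = 0 → (X none : BR A n) ^ e * h = Phi A n k p →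
      h ∈ Ik a k := by
  classical
  intro k
  induction k with
  | zero =>
      intro _ e p h hpM hpEv hpPhi
      cases e with
      | zero =>
          rw [pow_zero, one_mul] at hpPhi
          exact core_e0 a 0 p h hpEv hpPhi
      | succ e =>
          have hM0 : Mk A n 0 = ⊥ := by
            rw [Mk]
            convert Ideal.span_empty
            simp
          have hp0 : p = 0 := by
            have h1 : p ∈ Mk A n 0 := by
              have := Ideal.pow_le_pow_right (I := Mk A n 0) (Nat.one_le_iff_ne_zero.2 e.succ_ne_zero)
              rw [pow_one] at this
              exact this hpM
            rwa [hM0, Ideal.mem_bot] at h1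
          have : (X none : BR A n) ^ (e + 1) * h = (X none : BR A n) ^ (e + 1) * 0 := by
            rw [mul_zero, hpPhi, hp0, map_zero]
          rw [X_pow_cancel none (e + 1) this]
          exact zero_mem _
  | succ k ihk =>
      intro hk1 e
      have hkn : k ≤ n := Nat.le_of_succ_le hk1
      have hklt : k < n := hk1
      set kf : Fin n := ⟨k, hklt⟩ with hkf
      have hcore_k := ihk hkn
      have hregk : ∀ x : A, a kf * x ∈ Ia a k → x ∈ Ia a k := hreg kf
      have hNZD := NZD hcore_k kf hregk
      induction e with
      | zero =>
          intro p h _ hpEv hpPhi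
          rw [pow_zero, one_mul] at hpPhi
          exact core_e0 a (k + 1) p h hpEv hpPhi
      | succ e ihe =>
          intro p h hpM hpEv hpPhi
          set sk : Fin n →₀ ℕ := Finsupp.single kf 1 with hsk
          set p₁ := MvPolynomial.divMonomial p sk with hp₁
          set p₀ := MvPolynomial.modMonomial p sk with hp₀
          have hsplit : monomial sk 1 * p₁ + p₀ = p :=
            MvPolynomial.divMonomial_add_modMonomial p sk
          have hXkf : (monomial sk (1 : A) : MvPolynomial (Fin n) A) = X kf := rfl
          have hsupp_p : ∀ μ ∈ p.support, e + 1 ≤ degb (k + 1) μ := support_degb_of_mem hpM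
          -- support facts for p₀
          have hp₀sup : ∀ μ ∈ p₀.support, μ ∈ p.support ∧ μ kf = 0 := by
            intro μ hμ
            have hne := MvPolynomial.mem_support_iff.1 hμ
            by_cases hle : sk ≤ μ
            · exfalso; apply hne
              rw [hp₀]
              exact MvPolynomial.coeff_modMonomial_of_le p hle
            · have hc : coeff μ p₀ = coeff μ p := by
                rw [hp₀]; exact MvPolynomial.coeff_modMonomial_of_not_le p hle
              have hkf0 : μ kf = 0 := by
                by_contra h0
                exact hle ((Finsupp.single_le_iff).2 (Nat.one_le_iff_ne_zero.2 h0))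
              exact ⟨MvPolynomial.mem_support_iff.2 (by rwa [hc] at hne), hkf0⟩
          have hp₀M : p₀ ∈ Mk A n k ^ (e + 1) := by
            refine mem_Mk_of_support fun μ hμ => ?_
            obtain ⟨hμp, hμ0⟩ := hp₀sup μ hμ
            have h1 := hsupp_p μ hμp
            have h2 := degb_succ hklt μ
            rw [hμ0] at h2
            omega
          -- support facts for p₁
          have hp₁M : p₁ ∈ Mk A n (k + 1) ^ e := by
            refine mem_Mk_of_support fun μ hμ => ?_
            have hne := MvPolynomial.mem_support_iff.1 hμ
            have hc : coeff μ p₁ = coeff (sk + μ) p := by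
              rw [hp₁]; exact MvPolynomial.coeff_divMonomial sk p μ
            have hmem : sk + μ ∈ p.support :=
              MvPolynomial.mem_support_iff.2 (by rwa [hc] at hne)
            have h1 := hsupp_p _ hmem
            have h2 : degb (k + 1) (sk + μ) = degb (k + 1) sk + degb (k + 1) μ := degb_add _ _ _
            have h3 : degb (k + 1) sk = 1 := by
              rw [hsk, degb_single, if_pos]; simp [hkf]
            omega
          -- evaluation split
          have hEvp : Ev a (k + 1) p = 0 := hpEv
          have hkflt : ((kf : ℕ)) < k + 1 := by simp [hkf]
          have hEvsplit : C (a kf) * Ev a (k + 1) p₁ + Ev a (k + 1) p₀ = 0 := by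
            have := congrArg (Ev a (k + 1)) hsplit
            rw [map_add, map_mul, hXkf, Ev_X_lt hkflt, hEvp] at this
            exact this
          set E₀ := Ev a (k + 1) p₀ with hE₀def
          set E₁ := Ev a (k + 1) p₁ with hE₁def
          -- E₀ coefficients
          have hmapEv : Ideal.map (Ev a (k + 1)) (Mk A n k)
              ≤ Ideal.map (C : A →+* BR A n) (Ia a k) := by
            rw [Mk, Ideal.map_span, Ideal.span_le, ← Set.image_comp]
            rintro _ ⟨i, hi, rfl⟩
            have : Ev a (k + 1) (X i) = C (a i) := Ev_X_lt (Nat.lt_succ_of_lt hi)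
            simp only [Function.comp_apply, this]
            exact Ideal.mem_map_of_mem _ (Ideal.subset_span ⟨i, hi, rfl⟩)
          have hE₀mem : E₀ ∈ Ideal.map (C : A →+* BR A n) (Ia a k ^ (e + 1)) := by
            have h1 := Ideal.mem_map_of_mem (Ev a (k + 1)) hp₀M
            rw [Ideal.map_pow] at h1
            rw [Ideal.map_pow]
            exact Ideal.pow_right_mono hmapEv (e + 1) h1
          have hcoeffE₀ : ∀ μ, coeff μ E₀ ∈ Ia a k ^ (e + 1) := fun μ =>
            mem_map_C_iff.1 hE₀mem μ
          have hcoeffE₁ : ∀ μ, coeff μ E₁ ∈ Ia a k ^ (e + 1) := by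
            intro μ
            refine hNZD (e + 1) _ ?_
            have h1 : a kf * coeff μ E₁ = coeff μ (C (a kf) * E₁) := (coeff_C_mul μ _ _).symm
            have h2 : C (a kf) * E₁ = - E₀ := by
              rw [eq_neg_iff_add_eq_zero]; exact hEvsplit
            rw [h1, h2, coeff_neg]
            exact neg_mem (hcoeffE₀ μ)
          -- representatives
          choose r hrM hrsupp hrval using fun μ => exists_repr (a := a) (hcoeffE₁ μ)
          set F₁ : MvPolynomial (Fin n) A :=
            ∑ μ ∈ E₁.support, r μ * piB A n (monomial μ 1) with hF₁
          have hF₁M : F₁ ∈ Mk A n k ^ (e + 1) :=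
            Ideal.sum_mem _ fun μ _ => Ideal.mul_mem_right _ _ (hrM μ)
          have hE₁free : E₁ ∈ supported A
              {t : Option (Fin n) | ∃ j : Fin n, t = some j ∧ k + 1 ≤ (j : ℕ)} :=
            Ev_mem_free a (k + 1) p₁
          have hmono_free : ∀ μ ∈ E₁.support, (monomial μ (1 : A) : BR A n) ∈ supported A
              {t : Option (Fin n) | ∃ j : Fin n, t = some j ∧ k + 1 ≤ (j : ℕ)} := by
            intro μ hμ
            refine mem_supported_iff.2 fun ν hν t ht => ?_
            have hν' := MvPolynomial.support_monomial_subset hν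
            rcases Finset.mem_singleton.1 hν' with rfl
            exact mem_supported_iff.1 hE₁free _ hμ t ht
          have hEvF₁ : Ev a (k + 1) F₁ = E₁ := by
            rw [hF₁, map_sum]
            have : ∀ μ ∈ E₁.support,
                Ev a (k + 1) (r μ * piB A n (monomial μ 1)) = monomial μ (coeff μ E₁) := by
              intro μ hμ
              rw [map_mul, Ev_of_supported (Nat.le_succ k) (hrsupp μ), hrval μ,
                Ev_piB_of_free (hmono_free μ hμ), C_mul_monomial, mul_one]
            rw [Finset.sum_congr rfl this, ← E₁.as_sum]
          -- p₂ and variable-avoidance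
          set p₂ : MvPolynomial (Fin n) A := p₀ + C (a kf) * F₁ with hp₂
          have hp₂M : p₂ ∈ Mk A n k ^ (e + 1) :=
            Submodule.add_mem _ hp₀M (Ideal.mul_mem_left _ _ hF₁M)
          have hp₂Ev1 : Ev a (k + 1) p₂ = 0 := by
            rw [hp₂, map_add, map_mul, hEvF₁]
            have : Ev a (k + 1) (C (a kf)) = C (a kf) := by
              rw [← algebraMap_eq, AlgHom.commutes, algebraMap_eq]
            rw [this, ← hE₀def, add_comm]
            exact hEvsplit
          have hsub1 : ({i : Fin n | (i : ℕ) < k} : Set (Fin n)) ⊆ {i : Fin n | (i : ℕ) ≠ k} := by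
            intro i hi; simp only [Set.mem_setOf_eq] at hi ⊢; omega
          have hsub2 : ({i : Fin n | k + 1 ≤ (i : ℕ)} : Set (Fin n)) ⊆ {i : Fin n | (i : ℕ) ≠ k} := by
            intro i hi; simp only [Set.mem_setOf_eq] at hi ⊢; omega
          have hle1 := MvPolynomial.supported_mono (R := A) hsub1
          have hle2 := MvPolynomial.supported_mono (R := A) hsub2
          have hp₂supp : p₂ ∈ supported A {i : Fin n | (i : ℕ) ≠ k} := by
            refine Subalgebra.add_mem _ ?_ (Subalgebra.mul_mem _ ?_ ?_)
            · refine mem_supported_iff.2 fun μ hμ i hi => ?_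
              obtain ⟨-, hμ0⟩ := hp₀sup μ hμ
              intro hik
              have : i = kf := Fin.ext hik
              rw [this] at hi
              exact (Finsupp.mem_support_iff.1 hi) hμ0
            · rw [← algebraMap_eq]; exact Subalgebra.algebraMap_mem _ _
            · rw [hF₁]
              refine Subalgebra.sum_mem _ fun μ hμ => Subalgebra.mul_mem _ ?_ ?_
              · exact hle1 (hrsupp μ)
              · exact hle2 (piB_mem_free (hmono_free μ hμ))
          have hvars_p₂ : ∀ i ∈ p₂.vars, (i : ℕ) ≠ k := fun i hi =>
            (mem_supported.1 hp₂supp) hi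
          have hPhi_p₂ : Phi A n k p₂ = Phi A n (k + 1) p₂ := by
            refine aeval_congr_vars _ _ _ fun i hi => ?_
            have hik := hvars_p₂ i hi
            by_cases h : (i : ℕ) < k
            · rw [if_pos h, if_pos (by omega)]
            · rw [if_neg h, if_neg (by omega)]
          have hEv_p₂ : Ev a k p₂ = Ev a (k + 1) p₂ := by
            refine aeval_congr_vars _ _ _ fun i hi => ?_
            have hik := hvars_p₂ i hi
            by_cases h : (i : ℕ) < k
            · rw [if_pos h, if_pos (by omega)]
            · rw [if_neg h, if_neg (by omega)]
          have hp₂Ev : Ev a k p₂ = 0 := by rw [hEv_p₂]; exact hp₂Ev1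
          -- divisibilities and inner membership
          obtain ⟨g₁, hg₁⟩ := dvd_Phi_of_mem_Mk (Nat.le_succ k) hF₁M
          obtain ⟨h₂, hh₂⟩ := dvd_Phi_of_mem_Mk le_rfl hp₂M
          have hh₂I : h₂ ∈ Ik a k := hcore_k (e + 1) p₂ h₂ hp₂M hp₂Ev hh₂.symm
          set p₁' := p₁ - F₁ with hp₁'
          have hp₁'M : p₁' ∈ Mk A n (k + 1) ^ e := by
            refine Submodule.sub_mem _ hp₁M ?_
            exact Ideal.pow_le_pow_right e.le_succ
              (Ideal.pow_right_mono (Mk_mono (Nat.le_succ k)) (e + 1) hF₁M)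
          have hp₁'Ev : Ev a (k + 1) p₁' = 0 := by
            rw [hp₁', map_sub, hEvF₁, ← hE₁def, sub_self]
          obtain ⟨h₁, hh₁⟩ := dvd_Phi_of_mem_Mk le_rfl hp₁'M
          have hh₁I : h₁ ∈ Ik a (k + 1) := ihe p₁' h₁ hp₁'M hp₁'Ev hh₁.symm
          -- assembly
          have hPhiXkf : Phi A n (k + 1) (monomial sk (1 : A)) = X (some kf) * X none := by
            rw [hXkf]; exact Phi_X_lt hkflt
          have hPhiC : Phi A n (k + 1) (C (a kf)) = C (a kf) := by
            rw [← algebraMap_eq, AlgHom.commutes, algebraMap_eq]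
          have key : (X none : BR A n) ^ (e + 1) * h
              = (X none : BR A n) ^ (e + 1)
                * (X (some kf) * h₁ + fg a kf * g₁ + h₂) := by
            rw [hpPhi]
            have e1 : Phi A n (k + 1) p
                = X (some kf) * X none * Phi A n (k + 1) p₁ + Phi A n (k + 1) p₀ := by
              conv_lhs => rw [← hsplit]
              rw [map_add, map_mul, hPhiXkf]
            have e2 : Phi A n (k + 1) p₁
                = Phi A n (k + 1) p₁' + Phi A n (k + 1) F₁ := by
              rw [hp₁', map_sub]; ring
            have e3 : Phi A n (k + 1) p₀
                = X none ^ (e + 1) * h₂ - C (a kf) * (X none ^ (e + 1) * g₁) := by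
              have : Phi A n (k + 1) p₂
                  = Phi A n (k + 1) p₀ + C (a kf) * Phi A n (k + 1) F₁ := by
                rw [hp₂, map_add, map_mul, hPhiC]
              rw [hg₁, ← hPhi_p₂, hh₂] at this
              rw [eq_sub_iff_add_eq, this]
            rw [e1, e2, e3, hh₁, hg₁, fg]
            ring
          have := X_pow_cancel none (e + 1) key
          rw [this]
          refine Submodule.add_mem _ (Submodule.add_mem _ ?_ ?_) (Ik_mono (Nat.le_succ k) hh₂I)
          · exact Ideal.mul_mem_left _ _ hh₁I
          · exact Ideal.mul_mem_right _ _ (fg_mem_Ik (by simp [hkf]))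

end Core


section Homogenization

variable {a : Fin n → A}

/-- the weight function at stage `k` : `s` has weight 1, bound `v`'s weight `-1`, free ones `0`. -/
def wtk (n k : ℕ) : Option (Fin n) → ℤ :=
  fun t => t.elim 1 (fun i => if (i : ℕ) < k then -1 else 0)

@[simp] lemma wtk_none (k : ℕ) : wtk n k none = 1 := rfl
@[simp] lemma wtk_some (k : ℕ) (i : Fin n) : wtk n k (some i) = if (i : ℕ) < k then -1 else 0 := rfl

/-- bound degree of an `Option`-indexed exponent -/
def degbo (k : ℕ) (μ : Option (Fin n) →₀ ℕ) : ℕ :=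
  ∑ i ∈ Finset.univ.filter (fun i : Fin n => (i : ℕ) < k), μ (some i)

lemma degbo_add (k : ℕ) (μ ν : Option (Fin n) →₀ ℕ) :
    degbo k (μ + ν) = degbo k μ + degbo k ν := by
  simp [degbo, Finset.sum_add_distrib]

/-- restriction of an exponent to the `some`-part -/
noncomputable def resS (μ : Option (Fin n) →₀ ℕ) : Fin n →₀ ℕ :=
  Finsupp.comapDomain some μ (Option.some_injective _).injOn

@[simp] lemma resS_apply (μ : Option (Fin n) →₀ ℕ) (i : Fin n) : resS μ i = μ (some i) := rfl

lemma degb_resS (k : ℕ) (μ : Option (Fin n) →₀ ℕ) : degb k (resS μ) = degbo k μ := rfl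

lemma resS_add (μ ν : Option (Fin n) →₀ ℕ) : resS (μ + ν) = resS μ + resS ν := by
  ext i; simp

lemma resS_single_none (m : ℕ) : resS (n := n) (Finsupp.single none m) = 0 := by
  ext i; rw [resS_apply, Finsupp.single_apply]; simp

lemma resS_single_some (j : Fin n) (m : ℕ) :
    resS (Finsupp.single (some j) m) = Finsupp.single j m := by
  classical
  ext i
  rw [resS_apply, Finsupp.single_apply, Finsupp.single_apply]
  by_cases h : j = i
  · subst h; simp
  · rw [if_neg (by simpa using h), if_neg h]

lemma mapDomain_resS (μ : Option (Fin n) →₀ ℕ) :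
    Finsupp.mapDomain some (resS μ) = Finsupp.erase none μ := by
  classical
  ext t
  cases t with
  | none =>
      rw [Finsupp.mapDomain_notin_range _ _ (by simp), Finsupp.erase_same]
  | some i =>
      rw [Finsupp.mapDomain_apply (Option.some_injective _), resS_apply,
        Finsupp.erase_ne (by simp)]

lemma weight_wtk (k : ℕ) (μ : Option (Fin n) →₀ ℕ) :
    Finsupp.weight (wtk n k) μ = (μ none : ℤ) - degbo k μ := by
  classical
  induction μ using Finsupp.induction with
  | zero => simp [degbo]
  | single_add t m ν ht hm ih =>
      rw [map_add, ih, degbo_add, Finsupp.add_apply]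
      have hsingle : Finsupp.weight (wtk n k) (Finsupp.single t m) = (m : ℤ) • wtk n k t := by
        rw [show Finsupp.weight (wtk n k) (Finsupp.single t m)
            = (Finsupp.single t m).sum (fun i d => (d : ℤ) • wtk n k i) from rfl]
        rw [Finsupp.sum_single_index]
        simp
      rw [hsingle]
      cases t with
      | none =>
          have h1 : degbo k (Finsupp.single (none : Option (Fin n)) m) = 0 := by
            simp [degbo]
          rw [h1]
          simp
          push_cast
          ring
      | some j =>
          have h1 : degbo k (Finsupp.single (some j) m) = if (j : ℕ) < k then m else 0 := by
            rw [← degb_resS, resS_single_some, degb_single]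
          rw [h1]
          have h2 : (Finsupp.single (some j) m) none = 0 := by
            rw [Finsupp.single_apply]; simp
          rw [h2]
          by_cases hj : (j : ℕ) < k
          · simp [hj]; push_cast; ring
          · simp [hj]

lemma piB_monomial (μ : Option (Fin n) →₀ ℕ) (c : A) :
    piB A n (monomial μ c) = monomial (resS μ) c := by
  classical
  induction μ using Finsupp.induction with
  | zero =>
      have : resS (n := n) 0 = 0 := by ext i; simp
      rw [this]
      simp [algebraMap_eq]
  | single_add t m ν ht hm ih =>
      have hsplit : (monomial (Finsupp.single t m + ν) c : BR A n)
          = (X t) ^ m * monomial ν c := by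
        rw [X_pow_eq_monomial, monomial_mul, one_mul]
      rw [hsplit, map_mul, map_pow, ih, resS_add]
      cases t with
      | none =>
          rw [piB_X_none, one_pow, one_mul, resS_single_none, zero_add]
      | some j =>
          rw [piB_X_some, resS_single_some, X_pow_eq_monomial, monomial_mul, one_mul]

/-- the homogeneous case of the kernel statement -/
lemma KH [Nontrivial A]
    (hreg : ∀ kf : Fin n, ∀ x : A, a kf * x ∈ Ia a (kf : ℕ) → x ∈ Ia a (kf : ℕ))
    {k : ℕ} (hk : k ≤ n) {d : ℤ} {g : BR A n}
    (hg : IsWeightedHomogeneous (wtk n k) g d) (hε : Ev a k (piB A n g) = 0) :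
    g ∈ Ik a k := by
  classical
  set e : ℕ := (-d).toNat with he
  set dt : ℕ := d.toNat with hdt
  set p : MvPolynomial (Fin n) A := piB A n g with hp
  have hdeg : ∀ μ ∈ g.support, (μ none : ℤ) - degbo k μ = d := by
    intro μ hμ
    rw [← weight_wtk]
    exact hg (MvPolynomial.mem_support_iff.1 hμ)
  have hpsum : p = ∑ μ ∈ g.support, monomial (resS μ) (coeff μ g) := by
    rw [hp]
    conv_lhs => rw [g.as_sum]
    rw [map_sum]
    exact Finset.sum_congr rfl fun μ _ => piB_monomial μ _
  have hpM : p ∈ Mk A n k ^ e := by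
    rw [hpsum]
    refine Ideal.sum_mem _ fun μ hμ => ?_
    have h1 := monomial_mem_Mk (A := A) k (resS μ) (coeff μ g)
    rw [degb_resS] at h1
    refine Ideal.pow_le_pow_right ?_ h1
    have := hdeg μ hμ
    omega
  have hrel : (X none : BR A n) ^ e * g = (X none : BR A n) ^ dt * Phi A n k p := by
    rw [hpsum, map_sum, Finset.mul_sum]
    conv_lhs => rw [g.as_sum, Finset.mul_sum]
    refine Finset.sum_congr rfl fun μ hμ => ?_
    rw [Phi_monomial, mapDomain_resS, degb_resS, X_pow_eq_monomial, X_pow_eq_monomial,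
      monomial_mul, monomial_mul, one_mul]
    congr 1
    have hμdec : Finsupp.single (none : Option (Fin n)) (μ none) + Finsupp.erase none μ = μ :=
      Finsupp.single_add_erase none μ
    have harith : e + μ none = dt + degbo k μ := by
      have := hdeg μ hμ
      omega
    conv_lhs => rw [← hμdec, ← add_assoc, ← Finsupp.single_add]
    rw [add_comm (Finsupp.erase none μ), ← add_assoc, ← Finsupp.single_add, harith]
  by_cases hd : d ≤ 0
  · have hdt0 : dt = 0 := by omega
    rw [hdt0, pow_zero, one_mul] at hrel
    exact core a hreg k hk e p g hpM hε hrel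
  · have he0 : e = 0 := by omega
    rw [he0, pow_zero, one_mul] at hrel
    have hPhi : Phi A n k p ∈ Ik a k :=
      core a hreg k hk 0 p (Phi A n k p)
        (by rw [pow_zero, Ideal.one_eq_top]; trivial) hε (by rw [pow_zero, one_mul])
    rw [hrel]
    exact Ideal.mul_mem_left _ _ hPhi

end Homogenization


section Graded

variable {a : Fin n → A}

lemma whc_mul_homog0 {w : Option (Fin n) → ℤ} {f : BR A n}
    (hf : IsWeightedHomogeneous w f 0) (d : ℤ) (b : BR A n) :
    weightedHomogeneousComponent w d (b * f) = weightedHomogeneousComponent w d b * f := by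
  classical
  ext μ
  rw [coeff_weightedHomogeneousComponent, coeff_mul, coeff_mul]
  have hsplit : (if Finsupp.weight w μ = d then
        (∑ x ∈ Finset.HasAntidiagonal.antidiagonal μ, coeff x.1 b * coeff x.2 f) else 0)
      = ∑ x ∈ Finset.HasAntidiagonal.antidiagonal μ,
          (if Finsupp.weight w μ = d then coeff x.1 b * coeff x.2 f else 0) := by
    split_ifs with h
    · rfl
    · exact (Finset.sum_const_zero).symm
  rw [hsplit]
  refine Finset.sum_congr rfl fun x hx => ?_
  rw [coeff_weightedHomogeneousComponent]
  by_cases hy : coeff x.2 f = 0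
  · rw [hy, mul_zero, mul_zero]
    split_ifs <;> rfl
  · have hw2 : Finsupp.weight w x.2 = 0 := hf hy
    have hxsum : x.1 + x.2 = μ := Finset.HasAntidiagonal.mem_antidiagonal.1 hx
    have hwμ : Finsupp.weight w μ = Finsupp.weight w x.1 := by
      rw [← hxsum, map_add, hw2, add_zero]
    rw [hwμ]
    split_ifs <;> simp

lemma fg_homog0 {K : ℕ} {i : Fin n} (hi : (i : ℕ) < K) :
    IsWeightedHomogeneous (wtk n K) (fg a i) 0 := by
  rw [fg, ← mem_weightedHomogeneousSubmodule]
  refine Submodule.sub_mem _ ?_ ?_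
  · rw [mem_weightedHomogeneousSubmodule]
    have h1 := isWeightedHomogeneous_X A (wtk n K) (some i)
    have h2 := isWeightedHomogeneous_X A (wtk n K) (none : Option (Fin n))
    have := h1.mul h2
    rw [wtk_some, wtk_none, if_pos hi] at this
    simpa using this
  · rw [mem_weightedHomogeneousSubmodule]
    exact isWeightedHomogeneous_C _ _

lemma mem_Ik_component {k K : ℕ} (hkK : k ≤ K) {x : BR A n} (hx : x ∈ Ik a k) (d : ℤ) :
    weightedHomogeneousComponent (wtk n K) d x ∈ Ik a k := by
  classical
  rw [Ik, Set.image_eq_range] at hx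
  obtain ⟨c, hc⟩ := Finsupp.mem_span_range_iff_exists_finsupp.1 hx
  rw [← hc, Finsupp.sum, map_sum]
  refine Ideal.sum_mem _ fun i _ => ?_
  rw [smul_eq_mul, whc_mul_homog0 (fg_homog0 (lt_of_lt_of_le i.2 hkK)) d (c i)]
  exact Ideal.mul_mem_left _ _ (fg_mem_Ik i.2)

lemma decomp_mem {w : Option (Fin n) → ℤ} {I : Ideal (BR A n)} {x : BR A n}
    (h : ∀ d : ℤ, weightedHomogeneousComponent w d x ∈ I) : x ∈ I := by
  classical
  rw [← sum_weightedHomogeneousComponent w (φ := x),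
    finsum_eq_sum _ (weightedHomogeneousComponent_finsupp x)]
  exact Ideal.sum_mem _ fun d _ => h d

lemma whc_preserves_homog {w w' : Option (Fin n) → ℤ} {x : BR A n} {d m : ℤ}
    (hx : IsWeightedHomogeneous w' x d) :
    IsWeightedHomogeneous w' (weightedHomogeneousComponent w m x) d := by
  classical
  intro μ hμ
  rw [coeff_weightedHomogeneousComponent] at hμ
  by_cases h : Finsupp.weight w μ = m
  · exact hx (by rwa [if_pos h] at hμ)
  · exact absurd (by rw [if_neg h]) hμ

lemma pow_homog {w : Option (Fin n) → ℤ} {f : BR A n} {m : ℤ}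
    (hf : IsWeightedHomogeneous w f m) (j : ℕ) :
    IsWeightedHomogeneous w (f ^ j) (j • m) := by
  induction j with
  | zero => rw [pow_zero, zero_smul]; exact isWeightedHomogeneous_one (R := A) w
  | succ j ih =>
      rw [pow_succ, succ_nsmul]
      exact ih.mul hf

lemma aeval_homog {w : Option (Fin n) → ℤ} {f : Option (Fin n) → BR A n}
    (hf : ∀ t, IsWeightedHomogeneous w (f t) (w t)) {m : ℤ} {x : BR A n}
    (hx : IsWeightedHomogeneous w x m) :
    IsWeightedHomogeneous w (aeval f x) m := by
  classical
  conv_lhs => rw [x.as_sum]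
  rw [map_sum]
  refine IsWeightedHomogeneous.sum _ _ _ fun μ hμ => ?_
  rw [aeval_monomial]
  have h1 : IsWeightedHomogeneous w (μ.prod fun t j => f t ^ j)
      (∑ t ∈ μ.support, μ t • w t) := by
    rw [Finsupp.prod]
    exact IsWeightedHomogeneous.prod _ _ _ fun t _ => pow_homog (hf t) (μ t)
  have h2 : (∑ t ∈ μ.support, μ t • w t) = Finsupp.weight w μ := rfl
  have h3 : Finsupp.weight w μ = m := hx (MvPolynomial.mem_support_iff.1 hμ)
  have h4 : IsWeightedHomogeneous w ((algebraMap A (BR A n)) (coeff μ x)) 0 := by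
    rw [algebraMap_eq]
    exact isWeightedHomogeneous_C _ _
  have := h4.mul h1
  rw [zero_add, h2, h3] at this
  exact this

/-- `X t - C c` is a non-zero-divisor -/
lemma Xsub_nzd (t : Option (Fin n)) (c : A) (x : BR A n)
    (h : x * (X t - C c) = 0) : x = 0 := by
  classical
  set T : BR A n →ₐ[A] BR A n := aeval (fun u => if u = t then X u + C c else X u) with hT
  set T' : BR A n →ₐ[A] BR A n := aeval (fun u => if u = t then X u - C c else X u) with hT'
  have hTX : T (X t - C c) = X t := by
    rw [map_sub, hT]
    simp [algebraMap_eq]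
  have h2 : X t * T x = 0 := by
    have := congrArg T h
    rw [map_mul, hTX, map_zero, mul_comm] at this
    exact this
  have h3 : T x = 0 := by
    have h4 : (X t : BR A n) ^ 1 * T x = (X t : BR A n) ^ 1 * 0 := by
      rw [pow_one, h2, mul_zero]
    exact X_pow_cancel t 1 h4
  have hcomp : T'.comp T = AlgHom.id A (BR A n) := by
    apply MvPolynomial.algHom_ext
    intro u
    by_cases hu : u = t
    · subst hu
      simp only [AlgHom.comp_apply, AlgHom.id_apply, hT, hT']
      rw [aeval_X, if_pos rfl, map_add, aeval_X, if_pos rfl]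
      simp [algebraMap_eq]
    · simp only [AlgHom.comp_apply, AlgHom.id_apply, hT, hT']
      rw [aeval_X, if_neg hu, aeval_X, if_neg hu]
  have : T' (T x) = x := by
    rw [← AlgHom.comp_apply, hcomp, AlgHom.id_apply]
  rw [← this, h3, map_zero]

/-- the weight function detecting the variable `kf` -/
def wvk (kf : Fin n) : Option (Fin n) → ℤ :=
  fun t => t.elim 0 (fun j => if j = kf then 1 else 0)

lemma wvk_eq_sub {k : ℕ} (hklt : k < n) (t : Option (Fin n)) :
    wvk ⟨k, hklt⟩ t = wtk n k t - wtk n (k + 1) t := by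
  cases t with
  | none => simp [wvk]
  | some j =>
      simp only [wvk, Option.elim, wtk_some]
      by_cases hj : j = (⟨k, hklt⟩ : Fin n)
      · subst hj
        rw [if_pos rfl, if_neg (by simp), if_pos (by simp)]
        ring
      · have hjk : (j : ℕ) ≠ k := fun h => hj (Fin.ext h)
        rw [if_neg hj]
        by_cases h2 : (j : ℕ) < k
        · rw [if_pos h2, if_pos (by omega)]; ring
        · rw [if_neg h2, if_neg (by omega)]; ring

lemma weight_wvk {k : ℕ} (hklt : k < n) (μ : Option (Fin n) →₀ ℕ) :
    Finsupp.weight (wvk (⟨k, hklt⟩ : Fin n)) μ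
      = Finsupp.weight (wtk n k) μ - Finsupp.weight (wtk n (k + 1)) μ := by
  classical
  have h1 : ∀ (w : Option (Fin n) → ℤ), Finsupp.weight w μ
      = μ.sum (fun t e => (e : ℤ) • w t) := fun w => rfl
  rw [h1, h1, h1, ← Finsupp.sum_sub]
  refine Finsupp.sum_congr fun t _ => ?_
  rw [← smul_sub, wvk_eq_sub hklt t]

lemma homog_wv {k : ℕ} (hklt : k < n) {x : BR A n} {d m : ℤ}
    (h1 : IsWeightedHomogeneous (wtk n (k + 1)) x d)
    (h2 : IsWeightedHomogeneous (wtk n k) x m) :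
    IsWeightedHomogeneous (wvk (⟨k, hklt⟩ : Fin n)) x (m - d) := by
  intro μ hμ
  rw [weight_wvk hklt, h1 hμ, h2 hμ]

end Graded


section MainStep

variable {a : Fin n → A}

/-- the map killing `Ik a k` : `s ↦ 1`, bound `vᵢ ↦ aᵢ`, free `vⱼ ↦ vⱼ`. -/
noncomputable def epsB (a : Fin n → A) (k : ℕ) : BR A n →ₐ[A] BR A n :=
  aeval (fun t : Option (Fin n) => t.elim 1 (fun i => if (i : ℕ) < k then C (a i) else X (some i)))

@[simp] lemma epsB_X_none (k : ℕ) : epsB a k (X none) = 1 := by simp [epsB]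
@[simp] lemma epsB_X_lt {k : ℕ} {i : Fin n} (h : (i : ℕ) < k) :
    epsB a k (X (some i)) = C (a i) := by simp [epsB, h]
@[simp] lemma epsB_X_ge {k : ℕ} {i : Fin n} (h : ¬ (i : ℕ) < k) :
    epsB a k (X (some i)) = X (some i) := by simp [epsB, h]

lemma epsB_C (k : ℕ) (c : A) : epsB a k (C c) = C c := by
  rw [← algebraMap_eq, AlgHom.commutes, algebraMap_eq]

lemma epsB_eq_Ev_piB (k : ℕ) (x : BR A n) : epsB a k x = Ev a k (piB A n x) := by
  have hc : epsB a k = (Ev a k).comp (piB A n) := by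
    apply MvPolynomial.algHom_ext
    intro t
    cases t with
    | none =>
        rw [epsB_X_none, AlgHom.comp_apply, piB_X_none, map_one]
    | some i =>
        rw [AlgHom.comp_apply, piB_X_some]
        by_cases h : (i : ℕ) < k
        · rw [epsB_X_lt h, Ev_X_lt h]
        · rw [epsB_X_ge h, Ev_X_ge h]
  rw [hc]; rfl

lemma epsB_fg_lt {k : ℕ} {i : Fin n} (h : (i : ℕ) < k) : epsB a k (fg a i) = 0 := by
  rw [fg, map_sub, map_mul, epsB_X_lt h, epsB_X_none, epsB_C, mul_one, sub_self]

lemma epsB_fg_ge {k : ℕ} {i : Fin n} (h : ¬ (i : ℕ) < k) :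
    epsB a k (fg a i) = X (some i) - C (a i) := by
  rw [fg, map_sub, map_mul, epsB_X_ge h, epsB_X_none, epsB_C, mul_one]

lemma epsB_kills {k : ℕ} {x : BR A n} (hx : x ∈ Ik a k) : epsB a k x = 0 := by
  have hle : Ik a k ≤ RingHom.ker (epsB a k : BR A n →+* BR A n) := by
    rw [Ik, Ideal.span_le]
    rintro _ ⟨i, hi, rfl⟩
    rw [SetLike.mem_coe, RingHom.mem_ker]
    exact epsB_fg_lt hi
  exact RingHom.mem_ker.1 (hle hx)

lemma epsB_homog_vals {k : ℕ} (hklt : k < n) (t : Option (Fin n)) :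
    IsWeightedHomogeneous (wvk (⟨k, hklt⟩ : Fin n))
      ((fun t : Option (Fin n) =>
        t.elim (1 : BR A n) (fun i => if (i : ℕ) < k then C (a i) else X (some i))) t)
      (wvk (⟨k, hklt⟩ : Fin n) t) := by
  cases t with
  | none =>
      show IsWeightedHomogeneous _ (1 : BR A n) _
      have h0 : wvk (⟨k, hklt⟩ : Fin n) none = 0 := rfl
      rw [h0]
      exact isWeightedHomogeneous_one (R := A) _
  | some i =>
      by_cases h : (i : ℕ) < k
      · have h1 : (fun t : Option (Fin n) =>
            t.elim (1 : BR A n) (fun i => if (i : ℕ) < k then C (a i) else X (some i)))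
              (some i) = C (a i) := by simp [h]
        have h2 : wvk (⟨k, hklt⟩ : Fin n) (some i) = 0 := by
          have hne : i ≠ (⟨k, hklt⟩ : Fin n) := by
            intro he
            have : (i : ℕ) = k := by rw [he]
            omega
          simp [wvk, hne]
        rw [h1, h2]
        exact isWeightedHomogeneous_C _ _
      · have h1 : (fun t : Option (Fin n) =>
            t.elim (1 : BR A n) (fun i => if (i : ℕ) < k then C (a i) else X (some i)))
              (some i) = X (some i) := by simp [h]
        rw [h1]
        exact isWeightedHomogeneous_X A _ (some i)

/-- multiplication by `fg a ⟨k⟩` is injective mod `Ik a k` -/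
lemma main_step [Nontrivial A]
    (hreg : ∀ kf : Fin n, ∀ x : A, a kf * x ∈ Ia a (kf : ℕ) → x ∈ Ia a (kf : ℕ))
    {k : ℕ} (hklt : k < n) (g : BR A n)
    (hg : g * fg a ⟨k, hklt⟩ ∈ Ik a k) : g ∈ Ik a k := by
  classical
  set kf : Fin n := ⟨k, hklt⟩ with hkf
  have hkfk : (kf : ℕ) = k := rfl
  have hεfgk : epsB a k (fg a kf) = X (some kf) - C (a kf) :=
    epsB_fg_ge (by omega)
  refine decomp_mem (w := wtk n (k + 1)) fun d => ?_
  set gd := weightedHomogeneousComponent (wtk n (k + 1)) d g with hgd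
  have hgd_homog : IsWeightedHomogeneous (wtk n (k + 1)) gd d :=
    weightedHomogeneousComponent_isWeightedHomogeneous d g
  have hgdfg : gd * fg a kf ∈ Ik a k := by
    have hcomp := mem_Ik_component (Nat.le_succ k) hg d
    rwa [whc_mul_homog0 (fg_homog0 (show ((kf : ℕ)) < k + 1 by omega)) d g] at hcomp
  have hεgd : epsB a k gd = 0 := by
    have h0 := epsB_kills hgdfg
    rw [map_mul, hεfgk] at h0
    exact Xsub_nzd _ _ _ h0
  refine decomp_mem (w := wtk n k) fun m => ?_
  set gdm := weightedHomogeneousComponent (wtk n k) m gd with hgdm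
  have hgdm_homogk : IsWeightedHomogeneous (wtk n k) gdm m :=
    weightedHomogeneousComponent_isWeightedHomogeneous m gd
  have hεgdm : epsB a k gdm = 0 := by
    by_cases hm : gdm = 0
    · rw [hm, map_zero]
    have hfin := weightedHomogeneousComponent_finsupp (w := wtk n k) gd
    set D := hfin.toFinset with hD
    have hgdsum : gd = ∑ m' ∈ D, weightedHomogeneousComponent (wtk n k) m' gd := by
      conv_lhs => rw [← sum_weightedHomogeneousComponent (wtk n k) (φ := gd)]
      rw [finsum_eq_sum _ hfin]
    have hmD : m ∈ D := by
      rw [hD]; refine (Set.Finite.mem_toFinset (hs := hfin)).2 ?_; rw [Function.mem_support]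
      intro h0
      exact hm (by rw [hgdm, h0])
    have h0 : (0 : BR A n) = ∑ m' ∈ D, epsB a k (weightedHomogeneousComponent (wtk n k) m' gd) := by
      rw [← map_sum, ← hgdsum, hεgd]
    have hterm : ∀ m' ∈ D, weightedHomogeneousComponent (wvk kf) (m - d)
        (epsB a k (weightedHomogeneousComponent (wtk n k) m' gd))
        = if m' = m then epsB a k gdm else 0 := by
      intro m' _
      have ha1 : IsWeightedHomogeneous (wtk n (k + 1))
          (weightedHomogeneousComponent (wtk n k) m' gd) d := whc_preserves_homog hgd_homog
      have ha2 : IsWeightedHomogeneous (wtk n k)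
          (weightedHomogeneousComponent (wtk n k) m' gd) m' :=
        weightedHomogeneousComponent_isWeightedHomogeneous m' gd
      have ha3 := homog_wv hklt ha1 ha2
      have ha4 : IsWeightedHomogeneous (wvk kf)
          (epsB a k (weightedHomogeneousComponent (wtk n k) m' gd)) (m' - d) :=
        aeval_homog (epsB_homog_vals hklt) ha3
      by_cases hm' : m' = m
      · subst hm'
        rw [if_pos rfl, ← hgdm]
        exact ha4.weightedHomogeneousComponent_same
      · rw [if_neg hm']
        exact ha4.weightedHomogeneousComponent_ne _
          (fun hc => hm' (by omega))
    have hfinal := congrArg (weightedHomogeneousComponent (wvk kf) (m - d)) h0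
    rw [map_zero, map_sum, Finset.sum_congr rfl hterm,
      Finset.sum_ite_eq' D m (fun _ => epsB a k gdm), if_pos hmD] at hfinal
    exact hfinal.symm
  exact KH hreg (le_of_lt hklt) hgdm_homogk (by rw [← epsB_eq_Ev_piB]; exact hεgdm)

lemma one_not_mem_Ik [Nontrivial A] (a : Fin n → A) : (1 : BR A n) ∉ Ik a n := by
  intro h
  have := epsB_kills (a := a) (k := n) h
  rw [map_one] at this
  exact one_ne_zero this

end MainStep

section Final

lemma smul_top_self {R : Type*} [CommRing R] (I : Ideal R) : (I • ⊤ : Submodule R R) = I := by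
  rw [Ideal.smul_top_eq_map, Algebra.algebraMap_self, Ideal.map_id]; rfl

lemma ofList_take_ofFn {R : Type*} [CommRing R] (g : Fin n → R) (k : ℕ) :
    Ideal.ofList ((List.ofFn g).take k) = Ideal.span (g '' {i : Fin n | (i : ℕ) < k}) := by
  refine congrArg Ideal.span ?_
  ext r
  constructor
  · intro hr
    rw [Set.mem_setOf_eq, List.mem_take_iff_getElem] at hr
    obtain ⟨j, hm, hget⟩ := hr
    rw [List.length_ofFn] at hm
    obtain ⟨hjk, hjn⟩ := lt_min_iff.1 hm
    rw [List.getElem_ofFn] at hget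
    exact ⟨⟨j, by omega⟩, hjk, hget⟩
  · rintro ⟨i, hik, rfl⟩
    rw [Set.mem_setOf_eq, List.mem_take_iff_getElem]
    have hin : (i : ℕ) < n := i.2
    refine ⟨(i : ℕ), ?_, ?_⟩
    · rw [List.length_ofFn]
      exact lt_min_iff.2 ⟨hik, hin⟩
    · rw [List.getElem_ofFn]

/-- transfer regularity hypothesis -/
lemma hreg_of_isRegular {a : Fin n → A}
    (ha : RingTheory.Sequence.IsRegular A (List.ofFn a)) :
    ∀ kf : Fin n, ∀ x : A, a kf * x ∈ Ia a (kf : ℕ) → x ∈ Ia a (kf : ℕ) := by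
  intro kf x hx
  have hW := (RingTheory.Sequence.isWeaklyRegular_iff_Fin A (List.ofFn a)).1
    ha.toIsWeaklyRegular
  set i : Fin (List.ofFn a).length := ⟨(kf : ℕ), by rw [List.length_ofFn]; exact kf.2⟩ with hi
  have hreg := hW i
  have hIa : Ideal.ofList (List.take (i : ℕ) (List.ofFn a)) = Ia a (kf : ℕ) := by
    rw [ofList_take_ofFn]; rfl
  have hgetElem : (List.ofFn a)[i] = a kf := by
    rw [Fin.getElem_fin, List.getElem_ofFn]
  rw [hIa, hgetElem] at hreg
  -- hreg : IsSMulRegular (A ⧸ Ia a ↑kf • ⊤) (a kf)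
  have h1 : a kf • (Submodule.Quotient.mk x : A ⧸ (Ia a (kf : ℕ) • ⊤ : Submodule A A))
      = a kf • (Submodule.Quotient.mk 0) := by
    rw [← Submodule.Quotient.mk_smul, ← Submodule.Quotient.mk_smul, Submodule.Quotient.eq,
      smul_top_self]
    simpa [smul_eq_mul] using hx
  have h2 := hreg h1
  rw [Submodule.Quotient.eq, sub_zero, smul_top_self] at h2
  exact h2

end Final

end RegVS

open RegVS in
theorem regular_sequence_vs_sub_a
    (A : Type) [CommRing A] [Nontrivial A] (n : ℕ) (a : Fin n → A)
    (ha : RingTheory.Sequence.IsRegular A (List.ofFn a)) :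
    RingTheory.Sequence.IsRegular (MvPolynomial (Option (Fin n)) A)
      (List.ofFn fun i : Fin n =>
        (X (some i) * X none - C (a i) : MvPolynomial (Option (Fin n)) A)) := by
  classical
  have hreg := hreg_of_isRegular ha
  have hlist : (List.ofFn fun i : Fin n =>
      (X (some i) * X none - C (a i) : MvPolynomial (Option (Fin n)) A))
      = List.ofFn (fg a) := rfl
  rw [hlist]
  constructor
  · -- weakly regular
    rw [RingTheory.Sequence.isWeaklyRegular_iff_Fin]
    intro i
    have hlen : ((List.ofFn (fg a)).length) = n := List.length_ofFn
    have hilt : (i : ℕ) < n := by omega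
    have hIk : Ideal.ofList (List.take (i : ℕ) (List.ofFn (fg a))) = Ik a (i : ℕ) := by
      rw [ofList_take_ofFn]; rfl
    have hget : (List.ofFn (fg a))[i] = fg a ⟨(i : ℕ), hilt⟩ := by
      rw [Fin.getElem_fin, List.getElem_ofFn]
    rw [hIk, hget]
    intro y z hyz
    obtain ⟨y', rfl⟩ := Submodule.Quotient.mk_surjective _ y
    obtain ⟨z', rfl⟩ := Submodule.Quotient.mk_surjective _ z
    have hyz' : (fg a ⟨(i : ℕ), hilt⟩) • (Submodule.Quotient.mk y' :
        MvPolynomial (Option (Fin n)) A ⧸ (Ik a (i : ℕ) • ⊤ :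
          Submodule (MvPolynomial (Option (Fin n)) A) (MvPolynomial (Option (Fin n)) A)))
        = (fg a ⟨(i : ℕ), hilt⟩) • Submodule.Quotient.mk z' := hyz
    rw [← Submodule.Quotient.mk_smul, ← Submodule.Quotient.mk_smul, Submodule.Quotient.eq,
      smul_top_self] at hyz'
    have hmem : (y' - z') * fg a ⟨(i : ℕ), hilt⟩ ∈ Ik a (i : ℕ) := by
      have : fg a ⟨(i : ℕ), hilt⟩ • y' - fg a ⟨(i : ℕ), hilt⟩ • z'
          = (y' - z') * fg a ⟨(i : ℕ), hilt⟩ := by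
        rw [smul_eq_mul, smul_eq_mul]; ring
      rwa [this] at hyz'
    have := main_step hreg hilt (y' - z') hmem
    rw [Submodule.Quotient.eq, smul_top_self]
    exact this
  · -- properness
    intro htop
    have h1 : (1 : MvPolynomial (Option (Fin n)) A) ∈
        (Ideal.ofList (List.ofFn (fg a)) • ⊤ :
          Submodule (MvPolynomial (Option (Fin n)) A) (MvPolynomial (Option (Fin n)) A)) := by
      rw [← htop]; trivial
    rw [smul_top_self] at h1
    have h2 : Ideal.ofList (List.ofFn (fg a)) = Ik a n := by
      have : List.ofFn (fg a) = (List.ofFn (fg a)).take n := by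
        rw [List.take_of_length_le (by rw [List.length_ofFn])]
      rw [this, ofList_take_ofFn]; rfl
    rw [h2] at h1
    exact one_not_mem_Ik a h1
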